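/- arXiv:1601.02586 — 3 statements merged into one kernel-verified Lean document; each statement's English description precedes it below -/
import Mathlib

section
/- Averaging the squared modulus of the Vandermonde determinant over independent uniform phases yields a permanent: for positive reals a_1,…,a_n, ∫_{[0,2π]^n} |Δ_n(√a_1 e^{iφ_1},…,√a_n e^{iφ_n})|^2 ∏_j dφ_j/(2π) = Perm[a_b^{c-1}]_{b,c=1,…,n}, where Δ_n(x) = ∏_{b<c}(x_c − x_b) and Perm denotes the permanent. -/
open MeasureTheory Complex Finset

-- single-phase integral
lemma int_exp (m : ℤ) :
    ∫ t in Set.Ioc (0:ℝ) (2*Real.pi), Complex.exp (m * t * I)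
      = if m = 0 then ((2*Real.pi : ℝ) : ℂ) else 0 := by
  rw [← intervalIntegral.integral_of_le (by positivity)]
  by_cases hm : m = 0
  · simp [hm]
  · rw [if_neg hm]
    have hc : (m : ℂ) * I ≠ 0 := by
      simp [hm, Complex.I_ne_zero]
    have h := integral_exp_mul_complex (a := (0:ℝ)) (b := 2*Real.pi) hc
    simp_rw [mul_right_comm ((m:ℂ)) I] at h
    rw [h]
    rw [show ((m:ℂ)) * ((2*Real.pi : ℝ):ℂ) * I = (m:ℂ) * (2*Real.pi*I) by push_cast; ring]
    simp [Complex.exp_int_mul_two_pi_mul_I]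

-- product-pair expansion of Vandermonde
lemma vdm_expand {n : ℕ} (f : Fin n → ℂ) :
    ∏ p ∈ Finset.univ.filter (fun p : Fin n × Fin n => p.1 < p.2), (f p.2 - f p.1)
      = ∑ σ : Equiv.Perm (Fin n), ((Equiv.Perm.sign σ : ℤ) : ℂ) * ∏ b, f b ^ (σ b : ℕ) := by
  have h1 : ∏ p ∈ Finset.univ.filter (fun p : Fin n × Fin n => p.1 < p.2), (f p.2 - f p.1)
      = (Matrix.vandermonde f).det := by
    rw [Matrix.det_vandermonde, Finset.prod_filter, Fintype.prod_prod_type]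
    refine Finset.prod_congr rfl fun i _ => ?_
    rw [← Finset.filter_lt_eq_Ioi, Finset.prod_filter]
  rw [h1, ← Matrix.det_transpose, Matrix.det_apply]
  refine Finset.sum_congr rfl fun σ _ => ?_
  simp [Matrix.transpose_apply, Matrix.vandermonde_apply, Units.smul_def, zsmul_eq_mul]

lemma indic_prod {n : ℕ} (s : Fin n → Set ℝ) (g : Fin n → ℝ → ℂ) (x : Fin n → ℝ) :
    Set.indicator (Set.pi Set.univ s) (fun y => ∏ i, g i (y i)) x
      = ∏ i, Set.indicator (s i) (g i) (x i) := by
  by_cases h : x ∈ Set.pi Set.univ s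
  · rw [Set.indicator_of_mem h]
    exact Finset.prod_congr rfl fun i _ => (Set.indicator_of_mem (h i trivial) _).symm
  · rw [Set.indicator_of_notMem h]
    rw [Set.mem_univ_pi] at h
    push_neg at h
    obtain ⟨i, hi⟩ := h
    exact (Finset.prod_eq_zero (Finset.mem_univ i)
      (Set.indicator_of_notMem hi _)).symm

lemma coord_int (A : ℝ) (hA : 0 ≤ A) (k l : ℕ) :
    ∫ t in Set.Ioc (0:ℝ) (2*Real.pi),
        ((Real.sqrt A : ℂ) * Complex.exp (I*t))^k * ((Real.sqrt A : ℂ) * Complex.exp (-(I*t)))^l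
      = if k = l then (((2*Real.pi) * A^k : ℝ) : ℂ) else 0 := by
  have key : ∀ t : ℝ, ((Real.sqrt A : ℂ) * Complex.exp (I*t))^k * ((Real.sqrt A : ℂ) * Complex.exp (-(I*t)))^l
      = ((Real.sqrt A : ℂ))^(k+l) * Complex.exp ((((k:ℤ) - (l:ℤ) : ℤ) : ℂ) * t * I) := by
    intro t
    rw [mul_pow, mul_pow, ← Complex.exp_nat_mul, ← Complex.exp_nat_mul,
      mul_mul_mul_comm, ← Complex.exp_add, ← pow_add]
    congr 1
    push_cast
    ring
  simp_rw [key]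
  rw [MeasureTheory.integral_const_mul, int_exp]
  by_cases hkl : k = l
  · rw [if_pos hkl, if_pos (by omega)]
    subst hkl
    rw [show ((Real.sqrt A : ℂ))^(k+k) = (((Real.sqrt A)^(k+k) : ℝ) : ℂ) by push_cast; ring_nf,
      show (Real.sqrt A)^(k+k) = A^k by
        rw [show k+k = 2*k by ring, pow_mul, Real.sq_sqrt hA]]
    push_cast
    ring
  · rw [if_neg (by omega), if_neg hkl, mul_zero]

lemma hD_expand {n : ℕ} (a : Fin n → ℝ) (φ : Fin n → ℝ) :
    (((‖(∏ p ∈ Finset.univ.filter (fun p : Fin n × Fin n => p.1 < p.2),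
        ((Real.sqrt (a p.2) : ℂ) * Complex.exp (Complex.I * (φ p.2)) -
         (Real.sqrt (a p.1) : ℂ) * Complex.exp (Complex.I * (φ p.1))))‖)^2 : ℝ) : ℂ)
    = ∑ σ : Equiv.Perm (Fin n), ∑ τ : Equiv.Perm (Fin n),
        (((Equiv.Perm.sign σ : ℤ) * (Equiv.Perm.sign τ : ℤ) : ℤ) : ℂ) *
          ∏ b, (((Real.sqrt (a b) : ℂ) * Complex.exp (I * φ b))^(σ b : ℕ) *
                ((Real.sqrt (a b) : ℂ) * Complex.exp (-(I * φ b)))^(τ b : ℕ)) := by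
  have h0 : ∀ z : ℂ, ((‖z‖^2 : ℝ) : ℂ) = z * (starRingEnd ℂ) z := fun z => by
    rw [Complex.mul_conj, Complex.sq_norm]
  rw [h0, vdm_expand (fun b => (Real.sqrt (a b) : ℂ) * Complex.exp (I * (φ b : ℝ))), map_sum,
    Finset.sum_mul_sum]
  refine Finset.sum_congr rfl fun σ _ => Finset.sum_congr rfl fun τ _ => ?_
  rw [map_mul, map_prod]
  simp_rw [map_pow]
  have hc : ∀ b, (starRingEnd ℂ) ((Real.sqrt (a b):ℂ) * Complex.exp (I * (φ b))) =
      (Real.sqrt (a b):ℂ) * Complex.exp (-(I * (φ b))) := by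
    intro b
    rw [map_mul, Complex.conj_ofReal, ← Complex.exp_conj]
    congr 1
    simp
  simp_rw [hc, map_intCast]
  rw [mul_mul_mul_comm, ← Finset.prod_mul_distrib]
  push_cast
  ring

lemma ofReal_integral_eq {α : Type*} [MeasurableSpace α] (μ : MeasureTheory.Measure α)
    (f : α → ℝ) : ((∫ x, f x ∂μ : ℝ) : ℂ) = ∫ x, ((f x : ℝ) : ℂ) ∂μ :=
  (integral_ofReal (𝕜 := ℂ)).symm

/-- Averaging the squared modulus of the Vandermonde determinant over independent
uniform phases yields a permanent: for positive reals `a 1, …, a n`,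
`∫_{[0,2π]^n} |Δ_n(√a_1 e^{iφ_1},…,√a_n e^{iφ_n})|² ∏ dφ_j/(2π) = Perm[a_b^{c-1}]`. -/
theorem phase_average_vandermonde_sq_eq_permanent
    (n : ℕ) (a : Fin n → ℝ) (ha : ∀ j, 0 < a j) :
    (1 / (2 * Real.pi) ^ n) *
      ∫ φ in Set.pi Set.univ (fun _ : Fin n => Set.Ioc (0 : ℝ) (2 * Real.pi)),
        (‖(∏ p ∈ Finset.univ.filter (fun p : Fin n × Fin n => p.1 < p.2),
          ((Real.sqrt (a p.2) : ℂ) * Complex.exp (Complex.I * (φ p.2)) -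
           (Real.sqrt (a p.1) : ℂ) * Complex.exp (Complex.I * (φ p.1))))‖) ^ 2
    = ∑ σ : Equiv.Perm (Fin n), ∏ b, (a b) ^ ((σ b : ℕ)) := by
  set S := Set.pi Set.univ (fun _ : Fin n => Set.Ioc (0 : ℝ) (2 * Real.pi)) with hSdef
  have hS : MeasurableSet S := MeasurableSet.univ_pi fun _ => measurableSet_Ioc
  set g : Equiv.Perm (Fin n) → Equiv.Perm (Fin n) → Fin n → ℝ → ℂ := fun σ τ b t =>
    ((Real.sqrt (a b) : ℂ) * Complex.exp (I * t))^(σ b : ℕ) *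
      ((Real.sqrt (a b) : ℂ) * Complex.exp (-(I * t)))^(τ b : ℕ) with hg
  -- integral of each product term
  have hint : ∀ σ τ : Equiv.Perm (Fin n),
      (∫ φ in S, ∏ b, g σ τ b (φ b))
        = ∏ b, (if σ b = τ b then (((2*Real.pi) * (a b)^(σ b : ℕ) : ℝ) : ℂ) else 0) := by
    intro σ τ
    rw [← MeasureTheory.integral_indicator hS]
    simp_rw [hSdef, indic_prod (fun _ => Set.Ioc (0:ℝ) (2*Real.pi)) (g σ τ)]
    rw [MeasureTheory.integral_fintype_prod_volume_eq_prod]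
    refine Finset.prod_congr rfl fun b _ => ?_
    rw [MeasureTheory.integral_indicator measurableSet_Ioc, hg]
    rw [coord_int _ (ha b).le]
    simp [Fin.val_inj]
  -- integrability of each term
  have hterm : ∀ σ τ : Equiv.Perm (Fin n),
      MeasureTheory.IntegrableOn (fun φ : Fin n → ℝ =>
        (((Equiv.Perm.sign σ : ℤ) * (Equiv.Perm.sign τ : ℤ) : ℤ) : ℂ) * ∏ b, g σ τ b (φ b)) S := by
    intro σ τ
    apply MeasureTheory.IntegrableOn.mono_set
      (t := Set.pi Set.univ fun _ : Fin n => Set.Icc (0:ℝ) (2*Real.pi))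
    · apply ContinuousOn.integrableOn_compact (isCompact_univ_pi fun _ => isCompact_Icc)
      apply Continuous.continuousOn
      fun_prop
    · exact Set.pi_mono fun i _ => Set.Ioc_subset_Icc_self
  -- key computation
  have key : (∫ φ in S,
      (‖(∏ p ∈ Finset.univ.filter (fun p : Fin n × Fin n => p.1 < p.2),
        ((Real.sqrt (a p.2) : ℂ) * Complex.exp (Complex.I * (φ p.2)) -
         (Real.sqrt (a p.1) : ℂ) * Complex.exp (Complex.I * (φ p.1))))‖) ^ 2)
      = (2*Real.pi)^n * ∑ σ : Equiv.Perm (Fin n), ∏ b, (a b) ^ ((σ b : ℕ)) := by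
    have h1 : ((∫ φ in S,
        (‖(∏ p ∈ Finset.univ.filter (fun p : Fin n × Fin n => p.1 < p.2),
          ((Real.sqrt (a p.2) : ℂ) * Complex.exp (Complex.I * (φ p.2)) -
           (Real.sqrt (a p.1) : ℂ) * Complex.exp (Complex.I * (φ p.1))))‖) ^ 2 : ℝ) : ℂ)
        = ∑ σ : Equiv.Perm (Fin n), ∑ τ : Equiv.Perm (Fin n),
            (((Equiv.Perm.sign σ : ℤ) * (Equiv.Perm.sign τ : ℤ) : ℤ) : ℂ) *
              ∏ b, (if σ b = τ b then (((2*Real.pi) * (a b)^(σ b : ℕ) : ℝ) : ℂ) else 0) := by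
      rw [ofReal_integral_eq]
      simp_rw [hD_expand a]
      rw [MeasureTheory.integral_finset_sum _ (fun σ _ =>
        MeasureTheory.integrable_finset_sum _ (fun τ _ => hterm σ τ))]
      refine Finset.sum_congr rfl fun σ _ => ?_
      rw [MeasureTheory.integral_finset_sum _ (fun τ _ => hterm σ τ)]
      refine Finset.sum_congr rfl fun τ _ => ?_
      rw [MeasureTheory.integral_const_mul, hint σ τ]
    -- collapse the double sum
    have h2 : ∀ σ : Equiv.Perm (Fin n),
        (∑ τ : Equiv.Perm (Fin n),
          (((Equiv.Perm.sign σ : ℤ) * (Equiv.Perm.sign τ : ℤ) : ℤ) : ℂ) *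
            ∏ b, (if σ b = τ b then (((2*Real.pi) * (a b)^(σ b : ℕ) : ℝ) : ℂ) else 0))
        = (((2*Real.pi)^n * ∏ b, (a b) ^ ((σ b : ℕ)) : ℝ) : ℂ) := by
      intro σ
      rw [Finset.sum_eq_single σ]
      · have hs : ((Equiv.Perm.sign σ : ℤ) * (Equiv.Perm.sign σ : ℤ) : ℤ) = 1 := by
          rw [← Units.val_mul, Int.units_mul_self]; rfl
        rw [hs, Int.cast_one, one_mul,
          Finset.prod_congr rfl (fun b _ => if_pos rfl)]
        push_cast
        rw [Finset.prod_mul_distrib, Finset.prod_const, Finset.card_univ, Fintype.card_fin]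
      · intro τ _ hτ
        have : ∃ b, ¬ σ b = τ b := by
          by_contra h
          push_neg at h
          exact hτ (Equiv.ext fun b => (h b)).symm
        obtain ⟨b, hb⟩ := this
        exact mul_eq_zero_of_right _
          (Finset.prod_eq_zero (Finset.mem_univ b) (if_neg hb))
      · intro h
        exact absurd (Finset.mem_univ σ) h
    have h3 : ((∫ φ in S,
        (‖(∏ p ∈ Finset.univ.filter (fun p : Fin n × Fin n => p.1 < p.2),
          ((Real.sqrt (a p.2) : ℂ) * Complex.exp (Complex.I * (φ p.2)) -
           (Real.sqrt (a p.1) : ℂ) * Complex.exp (Complex.I * (φ p.1))))‖) ^ 2 : ℝ) : ℂ)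
        = (((2*Real.pi)^n * ∑ σ : Equiv.Perm (Fin n), ∏ b, (a b) ^ ((σ b : ℕ)) : ℝ) : ℂ) := by
      rw [h1]
      simp_rw [h2]
      push_cast
      rw [← Finset.mul_sum]
    exact_mod_cast h3
  rw [key, one_div, inv_mul_cancel_left₀ (by positivity)]
end

section
/- Laguerre weight determinant identity: for the weight ω(a) = a^ν e^{−a} with ν ∈ ℝ and positive reals a_1,…,a_n, one has det[(−a_k ∂_{a_k})^{j−1} ω(a_k)]_{j,k=1,…,n} = Δ_n(a) · (∏_{j=1}^n a_j^ν) · e^{−∑_j a_j}, where Δ_n(a) = ∏_{b<c}(a_c − a_b). -/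
open Finset Polynomial

noncomputable def lagP (ν : ℝ) : ℕ → Polynomial ℝ
  | 0 => 1
  | j + 1 => (X - C ν) * lagP ν j - X * derivative (lagP ν j)

lemma lagP_monic_deg (ν : ℝ) : ∀ j, (lagP ν j).Monic ∧ (lagP ν j).natDegree = j := by
  intro j
  induction j with
  | zero => exact ⟨monic_one, natDegree_one⟩
  | succ j ih =>
    obtain ⟨hm, hd⟩ := ih
    have hmain : ((X - C ν) * lagP ν j).Monic := (monic_X_sub_C ν).mul hm
    have hdeg : ((X - C ν) * lagP ν j).natDegree = j + 1 := by
      rw [(monic_X_sub_C ν).natDegree_mul hm, natDegree_X_sub_C, hd, add_comm]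
    have hnd : (X * derivative (lagP ν j)).natDegree < j + 1 := by
      rcases Nat.eq_zero_or_pos j with h0 | h0
      · subst h0
        simp [lagP]
      · have : (X * derivative (lagP ν j)).natDegree ≤ 1 + (j - 1) := by
          refine le_trans natDegree_mul_le ?_
          gcongr
          · exact natDegree_X_le
          · exact le_trans (natDegree_derivative_le _) (by rw [hd])
        omega
    have hlt : (X * derivative (lagP ν j)).degree < ((X - C ν) * lagP ν j).degree := by
      rw [degree_eq_natDegree hmain.ne_zero, hdeg]
      exact lt_of_le_of_lt degree_le_natDegree (by exact_mod_cast hnd)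
    have hsub : ((X - C ν) * lagP ν j - X * derivative (lagP ν j)).Monic := by
      rw [sub_eq_add_neg]
      exact hmain.add_of_left (by simpa using hlt)
    refine ⟨hsub, ?_⟩
    show ((X - C ν) * lagP ν j - X * derivative (lagP ν j)).natDegree = j + 1
    rw [natDegree_sub_eq_left_of_natDegree_lt (by rw [hdeg]; exact hnd), hdeg]

lemma lagP_eval (ν : ℝ) (ω : ℝ → ℝ) (hω : ω = fun x => x ^ ν * Real.exp (-x))
    (D : (ℝ → ℝ) → (ℝ → ℝ)) (hD : D = fun g x => -x * deriv g x) :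
    ∀ j, ∀ x : ℝ, 0 < x →
      D^[j] ω x = (lagP ν j).eval x * (x ^ ν * Real.exp (-x)) := by
  subst hD hω
  intro j
  induction j with
  | zero => intro x hx; simp [lagP]
  | succ j ih =>
    intro x hx
    have hder : ∀ y : ℝ, 0 < y →
        HasDerivAt (fun t => (lagP ν j).eval t * (t ^ ν * Real.exp (-t)))
          ((derivative (lagP ν j)).eval y * (y ^ ν * Real.exp (-y)) +
            (lagP ν j).eval y * (ν * y ^ (ν - 1) * Real.exp (-y) +
              y ^ ν * (Real.exp (-y) * -1))) y := by
      intro y hy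
      have h1 : HasDerivAt (fun t : ℝ => (lagP ν j).eval t)
          ((derivative (lagP ν j)).eval y) y := (lagP ν j).hasDerivAt y
      have h2 : HasDerivAt (fun t : ℝ => t ^ ν) (ν * y ^ (ν - 1)) y := by
        simpa using Real.hasDerivAt_rpow_const (p := ν) (Or.inl hy.ne')
      have h3 : HasDerivAt (fun t : ℝ => Real.exp (-t)) (Real.exp (-y) * -1) y :=
        (hasDerivAt_neg y).exp
      exact h1.mul (h2.mul h3)
    have heq : deriv ((fun g x => -x * deriv g x)^[j] fun x => x ^ ν * Real.exp (-x)) x =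
        (derivative (lagP ν j)).eval x * (x ^ ν * Real.exp (-x)) +
          (lagP ν j).eval x * (ν * x ^ (ν - 1) * Real.exp (-x) +
            x ^ ν * (Real.exp (-x) * -1)) := by
      have hev : ((fun g x => -x * deriv g x)^[j] fun x => x ^ ν * Real.exp (-x)) =ᶠ[nhds x]
          fun t => (lagP ν j).eval t * (t ^ ν * Real.exp (-t)) := by
        filter_upwards [isOpen_Ioi.mem_nhds (show x ∈ Set.Ioi (0:ℝ) from hx)] with y hy
        exact ih y hy
      rw [Filter.EventuallyEq.deriv_eq hev]
      exact (hder x hx).deriv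
    have hrw : x * (x ^ (ν - 1)) = x ^ ν := by
      rw [mul_comm, ← Real.rpow_add_one hx.ne']
      ring_nf
    rw [Function.iterate_succ_apply']
    show -x * deriv ((fun g x => -x * deriv g x)^[j] fun x => x ^ ν * Real.exp (-x)) x = _
    rw [heq]
    have hevalP : (lagP ν (j+1)).eval x
        = (x - ν) * (lagP ν j).eval x - x * (derivative (lagP ν j)).eval x := by
      simp [lagP]
    rw [hevalP]
    linear_combination (-(ν * (lagP ν j).eval x * Real.exp (-x))) * hrw

/-- Laguerre weight determinant identity: for `ω(a) = a^ν e^{−a}` and positive reals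
`a 1, …, a n`, `det[(−a_k ∂)^{j−1} ω(a_k)] = Δ_n(a) · ∏ a_j^ν · e^{−∑ a_j}`. -/
theorem laguerre_weight_derivative_determinant
    (n : ℕ) (ν : ℝ) (a : Fin n → ℝ) (ha : ∀ k, 0 < a k)
    (ω : ℝ → ℝ) (hω : ω = fun x => x ^ ν * Real.exp (-x))
    (D : (ℝ → ℝ) → (ℝ → ℝ)) (hD : D = fun g x => -x * deriv g x) :
    Matrix.det (Matrix.of fun j k : Fin n => D^[(j : ℕ)] ω (a k))
      = (∏ p ∈ Finset.univ.filter (fun p : Fin n × Fin n => p.1 < p.2),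
          (a p.2 - a p.1)) *
        (∏ j, (a j) ^ ν) * Real.exp (-(∑ j, a j)) := by
  have hM : (Matrix.of fun j k : Fin n => D^[(j : ℕ)] ω (a k))
      = Matrix.of fun j k : Fin n =>
          (a k ^ ν * Real.exp (-a k)) * (lagP ν (j : ℕ)).eval (a k) := by
    ext j k
    simp only [Matrix.of_apply]
    rw [lagP_eval ν ω hω D hD j (a k) (ha k)]
    ring
  rw [hM, Matrix.det_mul_row (fun k : Fin n => a k ^ ν * Real.exp (-a k))
    (fun j k : Fin n => (lagP ν (j : ℕ)).eval (a k))]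
  have hA : (Matrix.det fun j k : Fin n => (lagP ν (j : ℕ)).eval (a k))
      = (Matrix.vandermonde a).det := by
    show (Matrix.of fun j k : Fin n => (lagP ν (j : ℕ)).eval (a k)).det = _
    rw [← Matrix.det_transpose]
    have := Matrix.det_eval_matrixOfPolynomials_eq_det_vandermonde a
      (fun i : Fin n => lagP ν i)
      (fun i => (lagP_monic_deg ν i).2) (fun i => (lagP_monic_deg ν i).1)
    rw [this]
    congr 1
  rw [hA, Matrix.det_vandermonde]
  have hprod : (∏ p ∈ Finset.univ.filter (fun p : Fin n × Fin n => p.1 < p.2),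
      (a p.2 - a p.1)) = ∏ i : Fin n, ∏ j ∈ Ioi i, (a j - a i) := by
    rw [Finset.prod_filter, ← Finset.univ_product_univ, Finset.prod_product]
    refine Finset.prod_congr rfl fun i _ => ?_
    rw [← Finset.prod_filter]
    refine Finset.prod_congr ?_ fun j _ => rfl
    ext j
    simp
  have hw : ∏ k : Fin n, (a k ^ ν * Real.exp (-a k))
      = (∏ j, (a j) ^ ν) * Real.exp (-(∑ j, a j)) := by
    rw [Finset.prod_mul_distrib, ← Real.exp_sum]
    congr 2
    simp
  rw [hw, hprod]
  ring
end

section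
/- Normalization constant for polynomial ensembles of derivative type: if ω : (0,∞) → ℂ is (n−1)-times differentiable with y ↦ y^{k−1}(−y∂_y)^{j−1}ω(y) integrable on (0,∞) for all 1 ≤ j,k ≤ n (with vanishing boundary terms so that M[(−a∂_a)^{j−1}ω](k) = k^{j−1} M[ω](k)), then n! · det[ ∫_0^∞ a^{k−1} (−a∂_a)^{j−1} ω(a) da ]_{j,k=1,…,n} = n! · (∏_{j=0}^{n−1} j!) · ∏_{k=1}^n M[ω](k). -/
open MeasureTheory Finset

/-- Normalization constant for polynomial ensembles of derivative type: with
`M[(−a∂_a)^{j}ω](k+1) = (k+1)^{j} M[ω](k+1)` (vanishing boundary terms), one has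
`n! · det[∫_0^∞ a^k (−a∂_a)^j ω(a) da]_{j,k=0,…,n−1}
  = n! · (∏_{j=0}^{n−1} j!) · ∏_{k=1}^n M[ω](k)`. -/
theorem derivative_type_normalization_constant
    (n : ℕ) (ω : ℝ → ℂ)
    (D : (ℝ → ℂ) → (ℝ → ℂ))
    (hD : D = fun (g : ℝ → ℂ) (y : ℝ) => -(y : ℂ) * deriv g y)
    (hdiff : ∀ j < n - 1, DifferentiableOn ℝ (D^[j] ω) (Set.Ioi (0 : ℝ)))
    (hint : ∀ j < n, ∀ k < n,
      IntegrableOn (fun a : ℝ => (a : ℂ) ^ k * D^[j] ω a) (Set.Ioi 0))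
    (hmellin : ∀ j < n, ∀ k < n,
      ∫ a in Set.Ioi (0 : ℝ), (a : ℂ) ^ k * D^[j] ω a
        = ((k : ℂ) + 1) ^ j * ∫ a in Set.Ioi (0 : ℝ), (a : ℂ) ^ k * ω a) :
    (Nat.factorial n : ℂ) *
        Matrix.det (Matrix.of fun j k : Fin n =>
          ∫ a in Set.Ioi (0 : ℝ), (a : ℂ) ^ (k : ℕ) * D^[(j : ℕ)] ω a)
      = (Nat.factorial n : ℂ) *
          (∏ j ∈ Finset.range n, (Nat.factorial j : ℂ)) *
          ∏ k ∈ Finset.range n, ∫ a in Set.Ioi (0 : ℝ), (a : ℂ) ^ k * ω a := by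
  set c : ℕ → ℂ := fun k => ∫ a in Set.Ioi (0 : ℝ), (a : ℂ) ^ k * ω a with hc
  set V : Matrix (Fin n) (Fin n) ℂ :=
    (Matrix.vandermonde (fun k : Fin n => ((k : ℕ) : ℂ) + 1)).transpose with hVdef
  have hM : (Matrix.of fun j k : Fin n =>
      ∫ a in Set.Ioi (0 : ℝ), (a : ℂ) ^ (k : ℕ) * D^[(j : ℕ)] ω a)
      = Matrix.of fun j k : Fin n => c (k : ℕ) * V j k := by
    ext j k
    simp only [hVdef, Matrix.of_apply, Matrix.transpose_apply, Matrix.vandermonde]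
    rw [hmellin j j.isLt k k.isLt, mul_comm]
  rw [hM, Matrix.det_mul_row, hVdef, Matrix.det_transpose]
  have hV : (Matrix.vandermonde (fun k : Fin n => ((k : ℕ) : ℂ) + 1)).det
      = ∏ j ∈ Finset.range n, (Nat.factorial j : ℂ) := by
    cases n with
    | zero => simp
    | succ m =>
        have := Matrix.det_vandermonde_add (R := ℂ) (fun i : Fin (m + 1) => ((i : ℕ) : ℂ)) 1
        rw [this, Matrix.det_vandermonde_id_eq_superFactorial,
          ← Nat.prod_range_succ_factorial m]
        push_cast
        ring
  rw [hV]
  have hprod : ∏ k : Fin n, c (k : ℕ) = ∏ k ∈ Finset.range n, c k := by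
    rw [Finset.prod_range fun k => c k]
  rw [hprod]
  ring
end
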